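/- Let Δ be the full d-simplex, i.e., the simplicial complex on vertex set {1,...,d+1} containing all nonempty subsets as faces. Then there is a sequence of elementary 2-collapses reducing Δ to its 0-skeleton (the complex consisting of the d+1 vertices only). -/

import Mathlib

/-- `K'` arises from `K` by an elementary `d`-collapse at faces `σ ⊆ τ`:
`dim σ ≤ d - 1` (i.e. `σ.card ≤ d`), `τ` is inclusion-maximal in `K`, and `τ` is
the unique inclusion-maximal face of `K` containing `σ` (equivalently, every face
of `K` containing `σ` is contained in `τ`); the collapse removes all faces `η`
with `σ ⊆ η ⊆ τ`. -/
def ElemCollapse {V : Type*} [DecidableEq V] (d : ℕ)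
    (K K' : Finset (Finset V)) : Prop :=
  ∃ σ ∈ K, ∃ τ ∈ K, σ ⊆ τ ∧ σ.card ≤ d ∧
    (∀ η ∈ K, τ ⊆ η → η = τ) ∧
    (∀ η ∈ K, σ ⊆ η → η ⊆ τ) ∧
    K' = K.filter (fun η => ¬ (σ ⊆ η ∧ η ⊆ τ))



/-- State after processing all edges lexicographically smaller than `(a,b)`. -/
def St (d a b : ℕ) : Finset (Finset (Fin (d+1))) :=
  Finset.univ.powerset.filter
    (fun η => η.Nonempty ∧ ∀ x ∈ η, ∀ y ∈ η, (x:ℕ) < (y:ℕ) →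
      (a < (x:ℕ) ∨ (a = (x:ℕ) ∧ b ≤ (y:ℕ))))

lemma mem_St {d a b : ℕ} {η : Finset (Fin (d+1))} :
    η ∈ St d a b ↔ η.Nonempty ∧ ∀ x ∈ η, ∀ y ∈ η, (x:ℕ) < (y:ℕ) →
      (a < (x:ℕ) ∨ (a = (x:ℕ) ∧ b ≤ (y:ℕ))) := by
  simp [St]

lemma St_start (d : ℕ) :
    (Finset.univ : Finset (Fin (d + 1))).powerset.filter (fun σ => σ.Nonempty)
      = St d 0 0 := by
  ext η
  simp only [St, Finset.mem_filter, Finset.mem_powerset, Finset.subset_univ, true_and]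
  constructor
  · intro h; exact ⟨h, fun x _ y _ hxy => by omega⟩
  · intro h; exact h.1

lemma St_end (d : ℕ) :
    St d d (d+1)
      = (Finset.univ : Finset (Fin (d + 1))).powerset.filter (fun σ => σ.card = 1) := by
  ext η
  simp only [St, Finset.mem_filter, Finset.mem_powerset, Finset.subset_univ, true_and]
  constructor
  · rintro ⟨hne, h⟩
    have h1 : η.card ≤ 1 := by
      rw [Finset.card_le_one]
      intro x hx y hy
      by_contra hne'
      have hxy : (x:ℕ) ≠ (y:ℕ) := fun hc => hne' (Fin.ext hc)
      rcases Nat.lt_or_ge (x:ℕ) (y:ℕ) with h' | h'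
      · have := h x hx y hy h'
        have := x.isLt; have := y.isLt; omega
      · have h'' : (y:ℕ) < (x:ℕ) := by omega
        have := h y hy x hx h''
        have := x.isLt; have := y.isLt; omega
    have h2 : 1 ≤ η.card := Finset.one_le_card.mpr hne
    omega
  · intro h
    refine ⟨Finset.one_le_card.mp (by omega), fun x hx y hy hxy => ?_⟩
    have : x = y := Finset.card_le_one.mp (by omega) x hx y hy
    omega

lemma St_shift (d a : ℕ) : St d a (d+1) = St d (a+1) (a+2) := by
  ext η
  simp only [mem_St]
  refine and_congr_right fun _ => ?_
  constructor
  · intro h x hx y hy hxy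
    rcases h x hx y hy hxy with h' | h'
    · have := x.isLt; have := y.isLt; omega
    · have := y.isLt; omega
  · intro h x hx y hy hxy
    rcases h x hx y hy hxy with h' | h'
    · omega
    · omega

/-- Key containment: faces of `St d a b` containing both `a` and `b` lie in `τ`. -/
lemma St_subset_tau {d a b : ℕ} (hab : a < b) (hbd : b ≤ d)
    {η : Finset (Fin (d+1))} (hη : η ∈ St d a b)
    (hA : (⟨a, by omega⟩ : Fin (d+1)) ∈ η) (hB : (⟨b, by omega⟩ : Fin (d+1)) ∈ η) :
    η ⊆ insert (⟨a, by omega⟩ : Fin (d+1))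
        (Finset.univ.filter fun y : Fin (d+1) => b ≤ (y:ℕ)) := by
  rw [mem_St] at hη
  intro z hz
  simp only [Finset.mem_insert, Finset.mem_filter, Finset.mem_univ, true_and]
  by_contra hc
  push_neg at hc
  obtain ⟨hz1, hz2⟩ := hc
  have hza : (z:ℕ) ≠ a := fun h => hz1 (Fin.ext h)
  rcases Nat.lt_or_ge (z:ℕ) a with h' | h'
  · have := hη.2 z hz ⟨b, by omega⟩ hB (by simp; omega)
    simp at this; omega
  · -- a < z < b
    have := hη.2 ⟨a, by omega⟩ hA z hz (by simp; omega)
    simp at this; omega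

lemma St_step (d a b : ℕ) (hab : a < b) (hbd : b ≤ d) :
    ElemCollapse 2 (St d a b) (St d a (b+1)) := by
  set A : Fin (d+1) := ⟨a, by omega⟩ with hA
  set B : Fin (d+1) := ⟨b, by omega⟩ with hB
  have hAB : A ≠ B := by simp [hA, hB, Fin.ext_iff]; omega
  set τ : Finset (Fin (d+1)) :=
    insert A (Finset.univ.filter fun y : Fin (d+1) => b ≤ (y:ℕ)) with hτ
  have hBτ : B ∈ τ := by simp [hτ, hB]
  have hAτ : A ∈ τ := by simp [hτ]
  have hστ : ({A, B} : Finset (Fin (d+1))) ⊆ τ := by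
    intro z hz; simp at hz; rcases hz with h | h <;> simp [h, hAτ, hBτ]
  refine ⟨{A, B}, ?_, τ, ?_, hστ, ?_, ?_, ?_, ?_⟩
  · rw [mem_St]
    refine ⟨⟨A, by simp⟩, fun x hx y hy hxy => ?_⟩
    simp only [Finset.mem_insert, Finset.mem_singleton] at hx hy
    rcases hx with rfl | rfl <;> rcases hy with rfl | rfl <;> simp [hA, hB] at hxy ⊢ <;> omega
  · rw [mem_St]
    refine ⟨⟨A, hAτ⟩, fun x hx y hy hxy => ?_⟩
    simp only [hτ, Finset.mem_insert, Finset.mem_filter, Finset.mem_univ, true_and] at hx hy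
    rcases hx with rfl | hx
    · rcases hy with rfl | hy
      · omega
      · right; exact ⟨rfl, hy⟩
    · rcases hy with rfl | hy
      · left; simp [hA] at hxy ⊢; omega
      · left; omega
  · rw [Finset.card_insert_of_notMem (by simp [hAB]), Finset.card_singleton]
  · intro η hη hτη
    have := St_subset_tau hab hbd hη (hτη hAτ) (hτη hBτ)
    exact Finset.Subset.antisymm this hτη
  · intro η hη hση
    exact St_subset_tau hab hbd hη (hση (by simp [hA, hB])) (hση (by simp [hA, hB]))
  · ext η
    simp only [Finset.mem_filter]
    constructor
    · intro h
      rw [mem_St] at h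
      have hb : η ∈ St d a b := by
        rw [mem_St]
        refine ⟨h.1, fun x hx y hy hxy => ?_⟩
        rcases h.2 x hx y hy hxy with h' | h' <;> omega
      refine ⟨hb, fun ⟨hσ, _⟩ => ?_⟩
      have hAη : A ∈ η := hσ (by simp)
      have hBη : B ∈ η := hσ (by simp)
      have := h.2 A hAη B hBη (by simp [hA, hB]; omega)
      simp only [hA, hB] at this
      omega
    · rintro ⟨hη, hn⟩
      rw [mem_St] at hη ⊢
      refine ⟨hη.1, fun x hx y hy hxy => ?_⟩
      rcases hη.2 x hx y hy hxy with h' | h'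
      · left; exact h'
      · right
        refine ⟨h'.1, ?_⟩
        rcases Nat.lt_or_ge b (y:ℕ) with hy' | hy'
        · omega
        · have hyb : (y:ℕ) = b := by omega
          exfalso
          apply hn
          have hAη : A ∈ η := by
            have : x = A := by simp [hA, Fin.ext_iff]; omega
            rwa [← this]
          have hBη : B ∈ η := by
            have : y = B := by simp [hB, Fin.ext_iff]; omega
            rwa [← this]
          refine ⟨fun z hz => ?_, St_subset_tau hab hbd (mem_St.mpr hη) hAη hBη⟩
          simp at hz; rcases hz with rfl | rfl <;> assumption

lemma St_inner (d a : ℕ) (had : a < d) :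
    ∀ k b, d + 1 ≤ b + k → b ≤ d + 1 → a < b →
      Relation.ReflTransGen (ElemCollapse 2) (St d a b) (St d a (d+1)) := by
  intro k
  induction k with
  | zero =>
    intro b hb hb' _
    have : b = d + 1 := by omega
    rw [this]
  | succ n ih =>
    intro b hb hb' hab
    rcases Nat.lt_or_ge b (d+1) with h | h
    · exact Relation.ReflTransGen.head (St_step d a b hab (by omega))
        (ih (b+1) (by omega) (by omega) (by omega))
    · have : b = d + 1 := by omega
      rw [this]

lemma St_outer (d : ℕ) : ∀ k a, d ≤ a + k → a ≤ d →
    Relation.ReflTransGen (ElemCollapse 2) (St d a (a+1)) (St d d (d+1)) := by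
  intro k
  induction k with
  | zero =>
    intro a ha ha'
    have : a = d := by omega
    rw [this]
  | succ n ih =>
    intro a ha ha'
    rcases Nat.lt_or_ge a d with h | h
    · have h1 := St_inner d a h (d - a) (a+1) (by omega) (by omega) (by omega)
      rw [St_shift d a] at h1
      exact h1.trans (ih (a+1) (by omega) (by omega))
    · have : a = d := by omega
      rw [this]

theorem simplex_two_collapses_to_skeleton (d : ℕ) :
    Relation.ReflTransGen (ElemCollapse 2)
      ((Finset.univ : Finset (Fin (d + 1))).powerset.filter (fun σ => σ.Nonempty))
      ((Finset.univ : Finset (Fin (d + 1))).powerset.filter (fun σ => σ.card = 1)) := by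
  rw [St_start d, ← St_end d]
  have h00 : St d 0 0 = St d 0 1 := by
    ext η; simp only [mem_St]
    refine and_congr_right fun _ => ?_
    constructor <;> intro h x hx y hy hxy <;> rcases h x hx y hy hxy with h' | h' <;> omega
  rw [h00]
  exact St_outer d d 0 (by omega) (by omega)
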